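/- arXiv:1306.5364 — 7 statements merged into one kernel-verified Lean document; each statement's English description precedes it below -/
import Mathlib

section
/- Fix M > 0 and let r : ℝ² → ℝ be the function assigning to (u,v) the unique real number r(u,v) > 2M with e^{(v−u)/(2M)} = (1 − 2M/r)/((2M/r)·e^{−r/(2M)}). Then r is infinitely differentiable (C^∞) on ℝ². -/
open Real Filter

private lemma phi_hasDerivAt (M : ℝ) (hM : 0 < M) (x : ℝ) :
    HasDerivAt (fun x : ℝ => Real.exp (x / (2 * M)) * (x / (2 * M) - 1))
      (Real.exp (x / (2 * M)) * (x / (2 * M) * (1 / (2 * M)))) x := by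
  have h1 : HasDerivAt (fun x : ℝ => x / (2 * M)) (1 / (2 * M)) x := by
    simpa using (hasDerivAt_id x).div_const (2 * M)
  have h2 : HasDerivAt (fun x : ℝ => Real.exp (x / (2 * M))) (Real.exp (x / (2 * M)) * (1 / (2 * M))) x :=
    (Real.hasDerivAt_exp _).comp x h1
  have h3 : HasDerivAt (fun x : ℝ => x / (2 * M) - 1) (1 / (2 * M)) x := h1.sub_const 1
  have := h2.mul h3
  refine this.congr_deriv ?_
  ring

private lemma phi_strictMono (M : ℝ) (hM : 0 < M) :
    StrictMonoOn (fun x : ℝ => Real.exp (x / (2 * M)) * (x / (2 * M) - 1)) (Set.Ici 0) := by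
  apply strictMonoOn_of_deriv_pos (convex_Ici 0)
  · exact (Continuous.mul (Real.continuous_exp.comp (continuous_id.div_const _))
      ((continuous_id.div_const _).sub continuous_const)).continuousOn
  · intro x hx
    rw [interior_Ici] at hx
    rw [(phi_hasDerivAt M hM x).deriv]
    have : 0 < x / (2 * M) := div_pos hx (by linarith)
    positivity

/-- Fix M > 0 and let r : ℝ² → ℝ be the function assigning to
(u,v) the unique real number r(u,v) > 2M with
e^{(v−u)/(2M)} = (1 − 2M/r)/((2M/r)·e^{−r/(2M)}).
Then r is infinitely differentiable (C^∞) on ℝ². -/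
theorem stmt_2 (M : ℝ) (hM : 0 < M) (r : ℝ × ℝ → ℝ)
    (hr : ∀ u v : ℝ, 2 * M < r (u, v) ∧
      Real.exp ((v - u) / (2 * M)) =
        (1 - 2 * M / r (u, v)) / ((2 * M / r (u, v)) * Real.exp (-r (u, v) / (2 * M)))) :
    ContDiff ℝ (⊤ : ℕ∞) r := by
  set Φ : ℝ → ℝ := fun x => Real.exp (x / (2 * M)) * (x / (2 * M) - 1) with hΦdef
  have hM2 : (0:ℝ) < 2 * M := by linarith
  -- key identity: Φ (r (u,v)) = exp ((v-u)/(2M))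
  have hkey : ∀ u v : ℝ, Φ (r (u, v)) = Real.exp ((v - u) / (2 * M)) := by
    intro u v
    obtain ⟨hgt, heq⟩ := hr u v
    have hrpos : 0 < r (u, v) := lt_trans hM2 hgt
    have hexp : Real.exp (-r (u, v) / (2 * M)) ≠ 0 := Real.exp_ne_zero _
    rw [heq]
    have : Real.exp (-r (u,v) / (2 * M)) * Real.exp (r (u,v) / (2 * M)) = 1 := by
      rw [← Real.exp_add]; simp [neg_div]
    simp only [hΦdef]
    field_simp
    rw [neg_div] at this
    linear_combination (r (u,v) - 2 * M) * this
  -- smoothness of Φ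
  have hΦc : ContDiff ℝ (⊤ : ℕ∞) Φ :=
    (Real.contDiff_exp.comp ((contDiff_id.div_const _))).mul
      ((contDiff_id.div_const _).sub contDiff_const)
  -- continuous exp map E
  set E : ℝ × ℝ → ℝ := fun p => Real.exp ((p.2 - p.1) / (2 * M)) with hEdef
  have hEc : ContDiff ℝ (⊤ : ℕ∞) E :=
    Real.contDiff_exp.comp ((contDiff_snd.sub contDiff_fst).div_const _)
  have hkey' : ∀ p : ℝ × ℝ, Φ (r p) = E p := fun p => hkey p.1 p.2
  rw [contDiff_iff_contDiffAt]
  intro p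
  set x₀ := r p with hx₀
  have hx₀gt : 2 * M < x₀ := (hr p.1 p.2).1
  have hx₀pos : 0 < x₀ := lt_trans hM2 hx₀gt
  set d : ℝ := Real.exp (x₀ / (2 * M)) * (x₀ / (2 * M) * (1 / (2 * M))) with hddef
  have hdpos : 0 < d := by
    have : 0 < x₀ / (2 * M) := div_pos hx₀pos hM2
    positivity
  set e : ℝ ≃L[ℝ] ℝ := ContinuousLinearEquiv.unitsEquivAut ℝ (Units.mk0 d hdpos.ne') with hedef
  have hfd : HasFDerivAt Φ (e : ℝ →L[ℝ] ℝ) x₀ := by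
    have h := (phi_hasDerivAt M hM x₀).hasFDerivAt
    convert h using 1
    all_goals (ext; simp [hedef, hddef])
  have hΦat : ContDiffAt ℝ ((⊤ : ℕ∞) : WithTop ℕ∞) Φ x₀ := hΦc.contDiffAt
  have hn : ((⊤ : ℕ∞) : WithTop ℕ∞) ≠ 0 := by simp
  have hstrict : HasStrictFDerivAt Φ (e : ℝ →L[ℝ] ℝ) x₀ := hΦat.hasStrictFDerivAt' hfd hn
  set g : ℝ → ℝ := hΦat.localInverse hfd hn with hgdef
  have hgc : ContDiffAt ℝ ((⊤ : ℕ∞) : WithTop ℕ∞) g (Φ x₀) := hΦat.to_localInverse hfd hn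
  have hgΦ : g = hstrict.localInverse Φ e x₀ := rfl
  have hgx₀ : g (Φ x₀) = x₀ := hΦat.localInverse_apply_image hfd hn
  have hright : ∀ᶠ y in nhds (Φ x₀), Φ (g y) = y := by
    rw [hgΦ]; exact hstrict.eventually_right_inverse
  have hgcont : ContinuousAt g (Φ x₀) := hgc.continuousAt
  -- candidate smooth function
  have hcand : ContDiffAt ℝ ((⊤ : ℕ∞) : WithTop ℕ∞) (fun q => g (E q)) p := by
    have hEp : E p = Φ x₀ := (hkey' p).symm
    exact (hEp ▸ hgc).comp p hEc.contDiffAt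
  -- show r = fun q => g (E q) eventually near p
  have hEcont : ContinuousAt E p := hEc.continuous.continuousAt
  have hEp : E p = Φ x₀ := (hkey' p).symm
  have hEtend : Tendsto E (nhds p) (nhds (Φ x₀)) := hEp ▸ hEcont
  have h1 : ∀ᶠ q in nhds p, Φ (g (E q)) = E q := hEtend.eventually hright
  have h2 : ∀ᶠ q in nhds p, 2 * M < g (E q) := by
    have : Tendsto (fun q => g (E q)) (nhds p) (nhds x₀) := by
      have := hgcont.tendsto.comp hEtend
      rwa [hgx₀] at this
    exact this.eventually (eventually_gt_nhds hx₀gt)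
  have heq : ∀ᶠ q in nhds p, g (E q) = r q := by
    filter_upwards [h1, h2] with q hq1 hq2
    have hrq : 2 * M < r q := by
      have := (hr q.1 q.2).1; simpa using this
    have hΦeq : Φ (g (E q)) = Φ (r q) := by rw [hq1, hkey']
    have hinj := (phi_strictMono M hM).injOn
    exact hinj (Set.mem_Ici.2 (by linarith)) (Set.mem_Ici.2 (by linarith)) hΦeq
  exact hcand.congr_of_eventuallyEq (heq.mono fun q hq => hq.symm)
end

section
/- Define φ(x) = eˣ·(x − 1). The restriction of φ to (0, ∞) is a strictly increasing bijection onto (−1, ∞) whose inverse ψ : (−1, ∞) → (0, ∞) is C^∞. Consequently, for M > 0 the function R(U,V) := 2M·ψ(−UV) is C^∞ on the open set {(U,V) ∈ ℝ² : UV < 1}; on the Kruskal domain (−∞,0] × (0,∞) it satisfies R(U,V) ≥ 2M, with R(U,V) = 2M if and only if U = 0, and R(−e^{−u/(2M)}, e^{v/(2M)}) = r(u,v) for all (u,v) ∈ ℝ², where r is the Schwarzschild radius function. -/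
open Real Set

noncomputable def phi (x : ℝ) : ℝ := Real.exp x * (x - 1)

lemma phi_hasDerivAt_s5 (x : ℝ) : HasDerivAt phi (Real.exp x * x) x := by
  have h : HasDerivAt (fun y => Real.exp y * (y - 1)) (Real.exp x * (x - 1) + Real.exp x * 1) x := ((Real.hasDerivAt_exp x).mul ((hasDerivAt_id x).sub_const 1))
  convert h using 1
  · rfl
  · ring

lemma phi_contDiff : ContDiff ℝ (⊤ : ℕ∞) phi :=
  Real.contDiff_exp.mul (contDiff_id.sub contDiff_const)

lemma phi_strictMonoOn : StrictMonoOn phi (Set.Ici 0) := by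
  apply strictMonoOn_of_deriv_pos (convex_Ici 0) phi_contDiff.continuous.continuousOn
  intro x hx
  rw [interior_Ici, Set.mem_Ioi] at hx
  rw [(phi_hasDerivAt_s5 x).deriv]
  exact mul_pos (Real.exp_pos x) hx

lemma phi_zero : phi 0 = -1 := by simp [phi]

lemma phi_one : phi 1 = 0 := by simp [phi]

lemma phi_surj {y : ℝ} (hy : -1 < y) : ∃ x > 0, phi x = y := by
  set b : ℝ := max 1 (y + 2) with hb
  have hb1 : (1:ℝ) ≤ b := le_max_left _ _
  have hby : y + 2 ≤ b := le_max_right _ _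
  have hphib : y < phi b := by
    have h1 : b - 1 ≤ Real.exp b * (b - 1) := by
      nlinarith [Real.one_le_exp (by linarith : (0:ℝ) ≤ b)]
    have : y + 1 ≤ b - 1 := by linarith
    simp only [phi]; linarith
  have : y ∈ Set.Icc (phi 0) (phi b) := by
    rw [phi_zero]; exact ⟨hy.le, hphib.le⟩
  obtain ⟨x, hx, hfx⟩ := intermediate_value_Icc (by linarith : (0:ℝ) ≤ b)
    phi_contDiff.continuous.continuousOn this
  refine ⟨x, ?_, hfx⟩
  rcases hx.1.lt_or_eq with h | h
  · exact h
  · exfalso; rw [← h, phi_zero] at hfx; linarith [hfx ▸ hy]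

lemma phi_injOn : Set.InjOn phi (Set.Ioi 0) :=
  (phi_strictMonoOn.mono Set.Ioi_subset_Ici_self).injOn

noncomputable def psi : ℝ → ℝ := Function.invFunOn phi (Set.Ioi 0)

lemma psi_phi {x : ℝ} (hx : 0 < x) : psi (phi x) = x :=
  phi_injOn.leftInvOn_invFunOn hx

lemma psi_mem {y : ℝ} (hy : -1 < y) : psi y ∈ Set.Ioi 0 := by
  obtain ⟨x, hx, hfx⟩ := phi_surj hy
  exact Function.invFunOn_mem ⟨x, hx, hfx⟩

lemma phi_psi {y : ℝ} (hy : -1 < y) : phi (psi y) = y := by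
  obtain ⟨x, hx, hfx⟩ := phi_surj hy
  exact Function.invFunOn_eq ⟨x, hx, hfx⟩

lemma psi_contDiffAt {y : ℝ} (hy : -1 < y) : ContDiffAt ℝ (⊤ : ℕ∞) psi y := by
  have hn : ((⊤ : ℕ∞) : WithTop ℕ∞) ≠ 0 := by simp
  set x₀ : ℝ := psi y with hx₀def
  have hx₀ : 0 < x₀ := psi_mem hy
  have hphix₀ : phi x₀ = y := phi_psi hy
  have hc : Real.exp x₀ * x₀ ≠ 0 := by positivity
  set e : ℝ ≃L[ℝ] ℝ := ContinuousLinearEquiv.unitsEquivAut ℝ (Units.mk0 _ hc) with he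
  have hf' : HasFDerivAt phi (e : ℝ →L[ℝ] ℝ) x₀ := (phi_hasDerivAt_s5 x₀).hasFDerivAt
  have hcd : ContDiffAt ℝ (⊤ : ℕ∞) phi x₀ := phi_contDiff.contDiffAt
  have hst : HasStrictFDerivAt phi (e : ℝ →L[ℝ] ℝ) x₀ := hcd.hasStrictFDerivAt' hf' hn
  have hA : ∀ᶠ y' in nhds (phi x₀), phi (hcd.localInverse hf' hn y') = y' :=
    hst.eventually_right_inverse
  have hB : ∀ᶠ y' in nhds (phi x₀), hcd.localInverse hf' hn y' ∈ Set.Ioi 0 :=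
    hst.localInverse_tendsto (Ioi_mem_nhds hx₀)
  have hC : ∀ᶠ y' in nhds (phi x₀), y' ∈ Set.Ioi (-1 : ℝ) := by
    rw [hphix₀]; exact isOpen_Ioi.eventually_mem hy
  have heq : psi =ᶠ[nhds y] hcd.localInverse hf' hn := by
    rw [← hphix₀]
    filter_upwards [hA, hB, hC] with y' h1 h2 h3
    exact phi_injOn (psi_mem h3) h2 ((phi_psi h3).trans h1.symm)
  have := hcd.to_localInverse hf' hn
  rw [hphix₀] at this
  exact this.congr_of_eventuallyEq heq

lemma psi_mono {y₁ y₂ : ℝ} (h1 : -1 < y₁) (h : y₁ ≤ y₂) : psi y₁ ≤ psi y₂ := by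
  by_contra hlt
  push_neg at hlt
  have h2 : -1 < y₂ := lt_of_lt_of_le h1 h
  have := phi_strictMonoOn (Set.Ioi_subset_Ici_self (psi_mem h2)) (Set.Ioi_subset_Ici_self (psi_mem h1)) hlt
  rw [phi_psi h1, phi_psi h2] at this
  linarith

lemma psi_zero : psi 0 = 1 := by
  have := psi_phi one_pos
  rwa [phi_one] at this

/-- φ(x) = eˣ·(x−1) restricts to a strictly increasing bijection
(0,∞) → (−1,∞) with C^∞ inverse ψ; consequently R(U,V) := 2M·ψ(−UV) is C^∞ on
{UV < 1}, satisfies R ≥ 2M on the Kruskal domain (−∞,0] × (0,∞) with equality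
exactly on {U = 0}, and R(−e^{−u/(2M)}, e^{v/(2M)}) = r(u,v) where r is the
Schwarzschild radius function. -/
theorem stmt_5 (M : ℝ) (hM : 0 < M) (r : ℝ × ℝ → ℝ)
    (hr : ∀ u v : ℝ, 2 * M < r (u, v) ∧
      Real.exp ((v - u) / (2 * M)) =
        (1 - 2 * M / r (u, v)) / ((2 * M / r (u, v)) * Real.exp (-r (u, v) / (2 * M)))) :
    StrictMonoOn (fun x : ℝ => Real.exp x * (x - 1)) (Set.Ioi 0) ∧
    Set.BijOn (fun x : ℝ => Real.exp x * (x - 1)) (Set.Ioi 0) (Set.Ioi (-1)) ∧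
    ∃ ψ : ℝ → ℝ,
      (∀ x ∈ Set.Ioi (0 : ℝ), ψ (Real.exp x * (x - 1)) = x) ∧
      (∀ y ∈ Set.Ioi (-1 : ℝ), ψ y ∈ Set.Ioi (0 : ℝ) ∧ Real.exp (ψ y) * (ψ y - 1) = y) ∧
      ContDiffOn ℝ (⊤ : ℕ∞) ψ (Set.Ioi (-1)) ∧
      ContDiffOn ℝ (⊤ : ℕ∞) (fun p : ℝ × ℝ => 2 * M * ψ (-(p.1 * p.2)))
        {p : ℝ × ℝ | p.1 * p.2 < 1} ∧
      (∀ U V : ℝ, U ≤ 0 → 0 < V →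
        2 * M ≤ 2 * M * ψ (-(U * V)) ∧ (2 * M * ψ (-(U * V)) = 2 * M ↔ U = 0)) ∧
      (∀ u v : ℝ,
        2 * M * ψ (-(-Real.exp (-u / (2 * M)) * Real.exp (v / (2 * M)))) = r (u, v)) := by
  have hmono : StrictMonoOn phi (Set.Ioi 0) := phi_strictMonoOn.mono Set.Ioi_subset_Ici_self
  refine ⟨hmono, ⟨?_, phi_injOn, ?_⟩, psi, fun x hx => psi_phi hx,
    fun y hy => ⟨psi_mem hy, phi_psi hy⟩, ?_, ?_, ?_, ?_⟩
  · -- MapsTo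
    intro x hx
    have := phi_strictMonoOn (Set.mem_Ici.mpr (le_refl 0)) (Set.Ioi_subset_Ici_self hx) hx
    rw [phi_zero] at this
    exact this
  · -- SurjOn
    intro y hy
    obtain ⟨x, hx, hfx⟩ := phi_surj hy
    exact ⟨x, hx, hfx⟩
  · -- ContDiffOn psi
    exact fun y hy => (psi_contDiffAt hy).contDiffWithinAt
  · -- ContDiffOn R
    have hg : ContDiff ℝ (⊤ : ℕ∞) (fun p : ℝ × ℝ => -(p.1 * p.2)) :=
      (contDiff_fst.mul contDiff_snd).neg
    have hmaps : Set.MapsTo (fun p : ℝ × ℝ => -(p.1 * p.2))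
        {p : ℝ × ℝ | p.1 * p.2 < 1} (Set.Ioi (-1 : ℝ)) := by
      intro p hp
      simp only [Set.mem_setOf_eq] at hp
      simp only [Set.mem_Ioi]
      linarith
    have hcomp := ContDiffOn.comp (fun y hy => (psi_contDiffAt hy).contDiffWithinAt)
      hg.contDiffOn hmaps
    exact contDiffOn_const.mul hcomp
  · -- Kruskal domain
    intro U V hU hV
    have hUV : 0 ≤ -(U * V) := by nlinarith
    have hy : (-1 : ℝ) < -(U * V) := by linarith
    have h1 : 1 ≤ psi (-(U * V)) := by
      have := psi_mono (by norm_num) hUV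
      rwa [psi_zero] at this
    constructor
    · nlinarith
    · constructor
      · intro h
        have hpsi : psi (-(U * V)) = 1 := by
          have h2M : (2 * M) ≠ 0 := by positivity
          apply mul_left_cancel₀ h2M
          rw [h, mul_one]
        have := phi_psi hy
        rw [hpsi, phi_one] at this
        have hUV0 : U * V = 0 := by linarith
        rcases mul_eq_zero.mp hUV0 with h | h
        · exact h
        · exact absurd h hV.ne'
      · intro h
        rw [h]
        norm_num [psi_zero]
  · -- radius function
    intro u v
    obtain ⟨h1, h2⟩ := hr u v
    set R := r (u, v) with hR
    have hRpos : 0 < R := by linarith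
    set x : ℝ := R / (2 * M) with hxdef
    have h2M : (0:ℝ) < 2 * M := by linarith
    have hx1 : 1 < x := (one_lt_div h2M).mpr h1
    have step1 : -(-Real.exp (-u / (2 * M)) * Real.exp (v / (2 * M))) =
        Real.exp ((v - u) / (2 * M)) := by
      rw [neg_mul, neg_neg, ← Real.exp_add]
      congr 1
      ring
    have step2 : phi x = Real.exp ((v - u) / (2 * M)) := by
      rw [h2]
      show Real.exp x * (x - 1) = _
      rw [neg_div, Real.exp_neg]
      rw [hxdef]
      field_simp
    rw [step1, ← step2, psi_phi (by linarith : (0:ℝ) < x), hxdef]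
    field_simp
end

section
/- Let M > 0, p ≥ 0 and P > 2p be real numbers, and let u₀ ≤ u₁. Let τ, r : [u₀,u₁] → ℝ be C¹ with τ nondecreasing, r(u) ≥ 2M and |r′(u)| ≤ 2τ′(u) for all u, and let Ω² : [u₀,u₁] → ℝ be continuous with 0 ≤ Ω²(u) ≤ 2τ′(u) for all u. Then for every continuous Δ : [u₀,u₁] → ℝ satisfying |Δ(u)| ≤ e^{−Pτ(u)/(2M)}·(2M/r(u))^p for all u, one has ∫_{u₀}^{u₁} |Δ(u)|·Ω²(u) du ≤ (4M/(P−2p))·e^{−Pτ(u₀)/(2M)}·(2M/r(u₀))^p. In particular the bound is independent of u₁. -/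
/-- Lemma 8.1 of the paper, backward integration in the ingoing
null direction. Under the stated C¹ hypotheses on τ, r, the bounds
r ≥ 2M, |r′| ≤ 2τ′, 0 ≤ Ω² ≤ 2τ′ and the pointwise decay
|Δ(u)| ≤ e^{−Pτ(u)/(2M)}·(2M/r(u))^p with P > 2p ≥ 0, one has
∫_{u₀}^{u₁} |Δ|·Ω² du ≤ (4M/(P−2p))·e^{−Pτ(u₀)/(2M)}·(2M/r(u₀))^p,
uniformly in u₁. -/
theorem stmt_6 (M p P : ℝ) (hM : 0 < M) (hp : 0 ≤ p) (hP : 2 * p < P)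
    (u₀ u₁ : ℝ) (hu : u₀ ≤ u₁)
    (τ r Ωsq Δ τ' r' : ℝ → ℝ)
    (hτd : ∀ u ∈ Set.Icc u₀ u₁, HasDerivAt τ (τ' u) u)
    (hrd : ∀ u ∈ Set.Icc u₀ u₁, HasDerivAt r (r' u) u)
    (hτ'c : ContinuousOn τ' (Set.Icc u₀ u₁))
    (hr'c : ContinuousOn r' (Set.Icc u₀ u₁))
    (hτmono : MonotoneOn τ (Set.Icc u₀ u₁))
    (hr2M : ∀ u ∈ Set.Icc u₀ u₁, 2 * M ≤ r u)
    (hrτ : ∀ u ∈ Set.Icc u₀ u₁, |r' u| ≤ 2 * τ' u)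
    (hΩc : ContinuousOn Ωsq (Set.Icc u₀ u₁))
    (hΩ : ∀ u ∈ Set.Icc u₀ u₁, 0 ≤ Ωsq u ∧ Ωsq u ≤ 2 * τ' u)
    (hΔc : ContinuousOn Δ (Set.Icc u₀ u₁))
    (hΔ : ∀ u ∈ Set.Icc u₀ u₁,
      |Δ u| ≤ Real.exp (-(P * τ u) / (2 * M)) * (2 * M / r u) ^ p) :
    ∫ u in u₀..u₁, |Δ u| * Ωsq u ≤
      (4 * M / (P - 2 * p)) * Real.exp (-(P * τ u₀) / (2 * M)) * (2 * M / r u₀) ^ p := by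
  have hM2 : (0:ℝ) < 2 * M := by linarith
  have hPp : (0:ℝ) < P - 2 * p := by linarith
  set C : ℝ := 4 * M / (P - 2 * p) with hC
  have hCpos : 0 < C := by positivity
  have hrpos : ∀ u ∈ Set.Icc u₀ u₁, 0 < r u := fun u hu' => lt_of_lt_of_le hM2 (hr2M u hu')
  have hτ0 : ∀ u ∈ Set.Icc u₀ u₁, 0 ≤ τ' u := by
    intro u hu'
    have := hrτ u hu'
    have := abs_nonneg (r' u)
    linarith
  set φ : ℝ → ℝ := fun u => Real.exp (-(P * τ u) / (2 * M)) * (2 * M / r u) ^ p with hφ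
  set φ' : ℝ → ℝ := fun u =>
      (Real.exp (-(P * τ u) / (2 * M)) * (-(P * τ' u) / (2 * M))) * (2 * M / r u) ^ p
      + Real.exp (-(P * τ u) / (2 * M)) *
          (((0 * r u - 2 * M * r' u) / (r u) ^ 2) * p * (2 * M / r u) ^ (p - 1)) with hφ'
  have hder : ∀ u ∈ Set.Icc u₀ u₁, HasDerivAt φ (φ' u) u := by
    intro u hu'
    have h1 : HasDerivAt (fun u => -(P * τ u) / (2 * M)) (-(P * τ' u) / (2 * M)) u :=
      (((hτd u hu').const_mul P).neg).div_const _
    have h2 := h1.exp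
    have h3 : HasDerivAt (fun u => 2 * M / r u) ((0 * r u - 2 * M * r' u) / (r u) ^ 2) u :=
      (hasDerivAt_const u (2 * M)).div (hrd u hu') (ne_of_gt (hrpos u hu'))
    have hrp := hrpos u hu'
    have h4 := h3.rpow_const (p := p) (Or.inl (by positivity))
    exact h2.mul h4
  have key : ∀ u ∈ Set.Icc u₀ u₁, |Δ u| * Ωsq u ≤ -C * φ' u := by
    intro u hu'
    have hr0 := hrpos u hu'
    have hrne : r u ≠ 0 := ne_of_gt hr0
    have hA : 0 < Real.exp (-(P * τ u) / (2 * M)) := Real.exp_pos _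
    have hB : 0 < (2 * M / r u) ^ p := Real.rpow_pos_of_pos (by positivity) p
    have hτ0' := hτ0 u hu'
    have hB1 : (2 * M / r u) ^ (p - 1) = (2 * M / r u) ^ p * (r u / (2 * M)) := by
      rw [Real.rpow_sub (by positivity), Real.rpow_one]
      field_simp
    have hφ'eq : φ' u = -(Real.exp (-(P * τ u) / (2 * M)) * (2 * M / r u) ^ p *
        (P * τ' u / (2 * M) + p * (r' u / r u))) := by
      simp only [hφ']
      rw [hB1]
      field_simp
      ring
    have hr'low : -(2 * τ' u) ≤ r' u := neg_le_of_abs_le (hrτ u hu')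
    have h3 : -(τ' u) / M ≤ r' u / r u := by
      rw [div_le_div_iff₀ hM hr0]
      nlinarith [hr2M u hu']
    have h4 : p * (-(τ' u) / M) ≤ p * (r' u / r u) := mul_le_mul_of_nonneg_left h3 hp
    have heq : (P - 2 * p) * τ' u / (2 * M) = P * τ' u / (2 * M) + p * (-(τ' u) / M) := by
      field_simp
      ring
    have h1 : (P - 2 * p) * τ' u / (2 * M) ≤ P * τ' u / (2 * M) + p * (r' u / r u) := by
      linarith
    have h6 : C * ((P - 2 * p) * τ' u / (2 * M)) = 2 * τ' u := by
      rw [hC]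
      field_simp
      ring
    have hstep : 2 * τ' u ≤ C * (P * τ' u / (2 * M) + p * (r' u / r u)) := by
      have h5 := mul_le_mul_of_nonneg_left h1 hCpos.le
      linarith
    have step1 : |Δ u| * Ωsq u ≤
        (Real.exp (-(P * τ u) / (2 * M)) * (2 * M / r u) ^ p) * (2 * τ' u) := by
      apply mul_le_mul (hΔ u hu') (hΩ u hu').2 (hΩ u hu').1 (le_of_lt (by positivity))
    have step2 : (Real.exp (-(P * τ u) / (2 * M)) * (2 * M / r u) ^ p) * (2 * τ' u) ≤
        (Real.exp (-(P * τ u) / (2 * M)) * (2 * M / r u) ^ p) *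
          (C * (P * τ' u / (2 * M) + p * (r' u / r u))) :=
      mul_le_mul_of_nonneg_left hstep (le_of_lt (by positivity))
    have step3 : (Real.exp (-(P * τ u) / (2 * M)) * (2 * M / r u) ^ p) *
          (C * (P * τ' u / (2 * M) + p * (r' u / r u))) = -C * φ' u := by
      rw [hφ'eq]; ring
    exact le_trans step1 (le_trans step2 (le_of_eq step3))
  -- continuity facts
  have hτc : ContinuousOn τ (Set.Icc u₀ u₁) := fun u hu' =>
    (hτd u hu').continuousAt.continuousWithinAt
  have hrc : ContinuousOn r (Set.Icc u₀ u₁) := fun u hu' =>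
    (hrd u hu').continuousAt.continuousWithinAt
  have hrne : ∀ u ∈ Set.Icc u₀ u₁, r u ≠ 0 := fun u hu' => ne_of_gt (hrpos u hu')
  have hgc : ContinuousOn (fun u => Real.exp (-(P * τ u) / (2 * M))) (Set.Icc u₀ u₁) :=
    Real.continuous_exp.comp_continuousOn (((continuousOn_const.mul hτc).neg).div_const _)
  have hqc : ContinuousOn (fun u => 2 * M / r u) (Set.Icc u₀ u₁) :=
    continuousOn_const.div hrc hrne
  have hqne : ∀ u ∈ Set.Icc u₀ u₁, 2 * M / r u ≠ 0 := fun u hu' => by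
    have := hrpos u hu'; positivity
  have hBc : ContinuousOn (fun u => (2 * M / r u) ^ p) (Set.Icc u₀ u₁) :=
    hqc.rpow_const (fun u hu' => Or.inl (hqne u hu'))
  have hB1c : ContinuousOn (fun u => (2 * M / r u) ^ (p - 1)) (Set.Icc u₀ u₁) :=
    hqc.rpow_const (fun u hu' => Or.inl (hqne u hu'))
  have hq'c : ContinuousOn (fun u => (0 * r u - 2 * M * r' u) / (r u) ^ 2) (Set.Icc u₀ u₁) :=
    ((continuousOn_const.mul hrc).sub (continuousOn_const.mul hr'c)).div
      (hrc.pow 2) (fun u hu' => pow_ne_zero 2 (hrne u hu'))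
  have hφ'c : ContinuousOn φ' (Set.Icc u₀ u₁) := by
    apply ContinuousOn.add
    · exact (hgc.mul (((continuousOn_const.mul hτ'c)).neg.div_const _)).mul hBc
    · exact hgc.mul ((hq'c.mul continuousOn_const).mul hB1c)
  have hint1 : IntervalIntegrable (fun u => |Δ u| * Ωsq u) MeasureTheory.volume u₀ u₁ := by
    apply ContinuousOn.intervalIntegrable
    rw [Set.uIcc_of_le hu]
    exact hΔc.abs.mul hΩc
  have hint2 : IntervalIntegrable φ' MeasureTheory.volume u₀ u₁ := by
    apply ContinuousOn.intervalIntegrable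
    rw [Set.uIcc_of_le hu]
    exact hφ'c
  have hFTC : ∫ u in u₀..u₁, φ' u = φ u₁ - φ u₀ :=
    intervalIntegral.integral_eq_sub_of_hasDerivAt
      (fun u hu' => hder u (by rwa [Set.uIcc_of_le hu] at hu')) hint2
  have hmono : ∫ u in u₀..u₁, |Δ u| * Ωsq u ≤ ∫ u in u₀..u₁, -C * φ' u :=
    intervalIntegral.integral_mono_on hu hint1 (hint2.const_mul _) key
  have hval : ∫ u in u₀..u₁, -C * φ' u = -C * (φ u₁ - φ u₀) := by
    rw [intervalIntegral.integral_const_mul, hFTC]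
  have hφ1 : 0 ≤ φ u₁ := by
    have h := hrpos u₁ (Set.right_mem_Icc.mpr hu)
    have : (0:ℝ) < (2 * M / r u₁) ^ p := Real.rpow_pos_of_pos (by positivity) p
    positivity
  have hCφ1 : 0 ≤ C * φ u₁ := mul_nonneg hCpos.le hφ1
  have hrhs : (4 * M / (P - 2 * p)) * Real.exp (-(P * τ u₀) / (2 * M)) * (2 * M / r u₀) ^ p
      = C * φ u₀ := by rw [hC, hφ]; ring
  rw [hrhs]
  calc ∫ u in u₀..u₁, |Δ u| * Ωsq u ≤ -C * (φ u₁ - φ u₀) := by rw [← hval]; exact hmono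
    _ ≤ C * φ u₀ := by linarith [hCφ1]
end

section
/- Let M > 0, P > 0, p ≥ 0 be real numbers and let 1 < h ≤ h̃ ≤ 2. Let v₀ ≤ v₁ and let τ, r : [v₀,v₁] → ℝ be C¹ with τ′(v) ≥ (1/(2·4^h))·(2M/r(v))^h for all v, and with r nondecreasing and r(v) ≥ 2M for all v. Then for every continuous Δ : [v₀,v₁] → ℝ satisfying |Δ(v)| ≤ e^{−Pτ(v)/(2M)}·(2M/r(v))^p for all v, one has ∫_{v₀}^{v₁} (M^{h̃−1}/r(v)^{h̃})·|Δ(v)| dv ≤ (2·4^h/P)·(2M/r(v₀))^p·e^{−Pτ(v₀)/(2M)}. -/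
/-- Crux radial-weight comparison: for `b ≥ 2M`, `M > 0`, `1 < h ≤ h'`,
`M^(h'-1)/b^h' ≤ (2M)^(h-1)/b^h`. -/
lemma stmt_7_crux (M b h h' : ℝ) (hM : 0 < M) (hb : 2 * M ≤ b)
    (hh1 : 1 < h) (hhh : h ≤ h') :
    M ^ (h' - 1) / b ^ h' ≤ (2 * M) ^ (h - 1) / b ^ h := by
  have hb0 : 0 < b := lt_of_lt_of_le (by linarith) hb
  have e1 : M ^ (h' - 1) ≤ (2 * M) ^ (h - 1) * b ^ (h' - h) := by
    have h0 : h' - 1 = (h - 1) + (h' - h) := by ring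
    rw [h0, Real.rpow_add hM]
    exact mul_le_mul (Real.rpow_le_rpow hM.le (by linarith) (by linarith))
      (Real.rpow_le_rpow hM.le (by linarith) (by linarith))
      (Real.rpow_nonneg hM.le _) (Real.rpow_nonneg (by positivity) _)
  have e2 : b ^ h' = b ^ h * b ^ (h' - h) := by
    rw [← Real.rpow_add hb0]; ring_nf
  rw [e2, div_le_div_iff₀ (by positivity) (by positivity)]
  have hbh : (0 : ℝ) < b ^ h := Real.rpow_pos_of_pos hb0 h
  calc M ^ (h' - 1) * b ^ h ≤ ((2 * M) ^ (h - 1) * b ^ (h' - h)) * b ^ h :=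
        mul_le_mul_of_nonneg_right e1 hbh.le
    _ = (2 * M) ^ (h - 1) * (b ^ h * b ^ (h' - h)) := by ring

/-- estimate (8.4) of Lemma 8.2, backward integration in the
outgoing null direction with extra radial weight r^{−h̃}, h ≤ h̃ ≤ 2. -/
theorem stmt_7 (M P p h h' : ℝ) (hM : 0 < M) (hP : 0 < P) (hp : 0 ≤ p)
    (hh1 : 1 < h) (hhh : h ≤ h') (hh2 : h' ≤ 2)
    (v₀ v₁ : ℝ) (hv : v₀ ≤ v₁)
    (τ r Δ τ' r' : ℝ → ℝ)
    (hτd : ∀ v ∈ Set.Icc v₀ v₁, HasDerivAt τ (τ' v) v)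
    (hrd : ∀ v ∈ Set.Icc v₀ v₁, HasDerivAt r (r' v) v)
    (hτ'c : ContinuousOn τ' (Set.Icc v₀ v₁))
    (hr'c : ContinuousOn r' (Set.Icc v₀ v₁))
    (hτ' : ∀ v ∈ Set.Icc v₀ v₁,
      (1 / (2 * (4 : ℝ) ^ h)) * (2 * M / r v) ^ h ≤ τ' v)
    (hrmono : MonotoneOn r (Set.Icc v₀ v₁))
    (hr2M : ∀ v ∈ Set.Icc v₀ v₁, 2 * M ≤ r v)
    (hΔc : ContinuousOn Δ (Set.Icc v₀ v₁))
    (hΔ : ∀ v ∈ Set.Icc v₀ v₁,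
      |Δ v| ≤ Real.exp (-(P * τ v) / (2 * M)) * (2 * M / r v) ^ p) :
    ∫ v in v₀..v₁, (M ^ (h' - 1) / r v ^ h') * |Δ v| ≤
      (2 * (4 : ℝ) ^ h / P) * (2 * M / r v₀) ^ p *
        Real.exp (-(P * τ v₀) / (2 * M)) := by
  have h2M : (0 : ℝ) < 2 * M := by linarith
  have hv0 : v₀ ∈ Set.Icc v₀ v₁ := ⟨le_refl _, hv⟩
  have hv1 : v₁ ∈ Set.Icc v₀ v₁ := ⟨hv, le_refl _⟩
  have hr0 : ∀ v ∈ Set.Icc v₀ v₁, 0 < r v := fun v hvm =>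
    lt_of_lt_of_le h2M (hr2M v hvm)
  have h4h : (0 : ℝ) < (4 : ℝ) ^ h := Real.rpow_pos_of_pos (by norm_num) h
  have hr00 : 0 < r v₀ := hr0 v₀ hv0
  set K : ℝ := 2 * (4 : ℝ) ^ h / P * (2 * M / r v₀) ^ p with hKdef
  have hKpos : 0 < K := by
    apply mul_pos (by positivity)
    exact Real.rpow_pos_of_pos (by positivity) p
  set F : ℝ → ℝ := fun v => K * Real.exp (-(P * τ v) / (2 * M)) with hFdef
  set F' : ℝ → ℝ := fun v =>
    K * (Real.exp (-(P * τ v) / (2 * M)) * (-(P * τ' v) / (2 * M))) with hF'def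
  have hFd : ∀ v ∈ Set.Icc v₀ v₁, HasDerivAt F (F' v) v := by
    intro v hvm
    have h1 : HasDerivAt (fun v => -(P * τ v) / (2 * M)) (-(P * τ' v) / (2 * M)) v :=
      (((hτd v hvm).const_mul P).neg).div_const (2 * M)
    exact (h1.exp).const_mul K
  have hτc : ContinuousOn τ (Set.Icc v₀ v₁) := fun v hvm =>
    (hτd v hvm).continuousAt.continuousWithinAt
  have hrc : ContinuousOn r (Set.Icc v₀ v₁) := fun v hvm =>
    (hrd v hvm).continuousAt.continuousWithinAt
  -- pointwise inequality
  have key : ∀ v ∈ Set.Icc v₀ v₁,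
      (M ^ (h' - 1) / r v ^ h') * |Δ v| ≤ -F' v := by
    intro v hvm
    have hb2 : 2 * M ≤ r v := hr2M v hvm
    have hb0 : 0 < r v := hr0 v hvm
    have hb00 : r v₀ ≤ r v := hrmono hv0 hvm hvm.1
    set E : ℝ := Real.exp (-(P * τ v) / (2 * M)) with hEdef
    have hE : 0 < E := Real.exp_pos _
    -- step 1: |Δ| bound, with (2M/r v)^p ≤ (2M/r v₀)^p
    have s3 : (2 * M / r v) ^ p ≤ (2 * M / r v₀) ^ p :=
      Real.rpow_le_rpow (by positivity)
        (div_le_div_of_nonneg_left h2M.le hr00 hb00) hp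
    have s1 : |Δ v| ≤ E * (2 * M / r v₀) ^ p := by
      calc |Δ v| ≤ E * (2 * M / r v) ^ p := hΔ v hvm
        _ ≤ E * (2 * M / r v₀) ^ p := by
            exact mul_le_mul_of_nonneg_left s3 hE.le
    -- step 2: crux
    have s2 : M ^ (h' - 1) / r v ^ h' ≤ (2 * M) ^ (h - 1) / r v ^ h :=
      stmt_7_crux M (r v) h h' hM hb2 hh1 hhh
    have hCnn : 0 ≤ M ^ (h' - 1) / r v ^ h' := by positivity
    have hAnn : 0 ≤ (2 * M) ^ (h - 1) / r v ^ h := by positivity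
    have h1 : (M ^ (h' - 1) / r v ^ h') * |Δ v| ≤
        ((2 * M) ^ (h - 1) / r v ^ h) * (E * (2 * M / r v₀) ^ p) :=
      mul_le_mul s2 s1 (abs_nonneg _) hAnn
    -- step 4: τ' bound turning coefficient into -F'
    have hτ'v := hτ' v hvm
    have h2 : ((2 * M) ^ (h - 1) / r v ^ h) * (E * (2 * M / r v₀) ^ p) ≤ -F' v := by
      have hFv : -F' v = K * (E * (P * τ' v / (2 * M))) := by
        simp only [hF'def]; ring
      rw [hFv]
      have hlow : K * (E * (P * ((1 / (2 * (4:ℝ) ^ h)) * (2 * M / r v) ^ h) / (2 * M))) ≤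
          K * (E * (P * τ' v / (2 * M))) := by
        apply mul_le_mul_of_nonneg_left _ hKpos.le
        apply mul_le_mul_of_nonneg_left _ hE.le
        apply div_le_div_of_nonneg_right _ h2M.le
        exact mul_le_mul_of_nonneg_left hτ'v hP.le
      refine le_trans (le_of_eq ?_) hlow
      -- equality of coefficients
      have hX : (2 * M / r v) ^ h = (2 * M) ^ h / r v ^ h :=
        Real.div_rpow h2M.le hb0.le h
      have hXX : (2 * M) ^ h = (2 * M) ^ (h - 1) * (2 * M) := by
        nth_rewrite 1 [show h = (h - 1) + 1 by ring]
        rw [Real.rpow_add h2M, Real.rpow_one]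
      rw [hKdef, hX, hXX]
      have hrh : (0 : ℝ) < r v ^ h := Real.rpow_pos_of_pos hb0 h
      field_simp
    exact le_trans h1 h2
  -- integrability
  have huIcc : Set.uIcc v₀ v₁ = Set.Icc v₀ v₁ := Set.uIcc_of_le hv
  have hintf : IntervalIntegrable (fun v => (M ^ (h' - 1) / r v ^ h') * |Δ v|)
      MeasureTheory.volume v₀ v₁ := by
    apply ContinuousOn.intervalIntegrable
    rw [huIcc]
    apply ContinuousOn.mul _ hΔc.abs
    apply ContinuousOn.div continuousOn_const
    · exact hrc.rpow_const (fun v hvm => Or.inl (ne_of_gt (hr0 v hvm)))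
    · intro v hvm
      exact ne_of_gt (Real.rpow_pos_of_pos (hr0 v hvm) h')
  have hF'c : ContinuousOn F' (Set.Icc v₀ v₁) := by
    apply ContinuousOn.mul continuousOn_const
    apply ContinuousOn.mul
    · exact (((hτc.const_smul P).neg.div_const (2 * M)).rexp)
    · exact ((hτ'c.const_smul P).neg.div_const (2 * M))
  have hintF' : IntervalIntegrable F' MeasureTheory.volume v₀ v₁ := by
    apply ContinuousOn.intervalIntegrable; rw [huIcc]; exact hF'c
  have hintnF' : IntervalIntegrable (fun v => -F' v) MeasureTheory.volume v₀ v₁ :=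
    hintF'.neg
  have hFTC : ∫ v in v₀..v₁, F' v = F v₁ - F v₀ := by
    apply intervalIntegral.integral_eq_sub_of_hasDerivAt
    · intro v hvm; exact hFd v (huIcc ▸ hvm)
    · exact hintF'
  have hmono : ∫ v in v₀..v₁, (M ^ (h' - 1) / r v ^ h') * |Δ v| ≤
      ∫ v in v₀..v₁, -F' v :=
    intervalIntegral.integral_mono_on hv hintf hintnF' key
  have hFin : ∫ v in v₀..v₁, -F' v = F v₀ - F v₁ := by
    rw [intervalIntegral.integral_neg, hFTC]; ring
  have hF1 : 0 ≤ F v₁ := by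
    simp only [hFdef]
    positivity
  have : ∫ v in v₀..v₁, (M ^ (h' - 1) / r v ^ h') * |Δ v| ≤ F v₀ := by
    rw [hFin] at hmono; linarith
  calc ∫ v in v₀..v₁, (M ^ (h' - 1) / r v ^ h') * |Δ v| ≤ F v₀ := this
    _ = (2 * (4 : ℝ) ^ h / P) * (2 * M / r v₀) ^ p *
        Real.exp (-(P * τ v₀) / (2 * M)) := by
      simp only [hFdef, hKdef]
end

section
/- Let M > 0, P > 0 and p > 0 be real numbers, and let v₀ ≤ v₁. Let τ, r : [v₀,v₁] → ℝ be C¹ with τ nondecreasing, r nondecreasing and r(v) ≥ 2M for all v; assume moreover that r′(v) ≥ 1/2 at every v with r(v) ≥ 8M, and that τ′(v) ≥ 1/2 at every v with r(v) ≤ 8M. Then for every continuous Δ : [v₀,v₁] → ℝ satisfying |Δ(v)| ≤ e^{−Pτ(v)/(2M)}·(2M/r(v))^p for all v, one has ∫_{v₀}^{v₁} (1/r(v))·|Δ(v)| dv ≤ (2/p + 4/P)·(2M/r(v₀))^p·e^{−Pτ(v₀)/(2M)}. -/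
open Set

/-- Derivative of a function monotone on a nontrivial closed interval is nonnegative there. -/
lemma aux_deriv_nonneg {a b v d : ℝ} {f : ℝ → ℝ} (hab : a < b)
    (hv : v ∈ Set.Icc a b) (hm : MonotoneOn f (Set.Icc a b))
    (hd : HasDerivAt f d v) : 0 ≤ d := by
  have hs : HasDerivWithinAt f d (Set.Icc a b) v := hd.hasDerivWithinAt
  rw [hasDerivWithinAt_iff_tendsto_slope] at hs
  have hne : (nhdsWithin v (Set.Icc a b \ {v})).NeBot := by
    rcases lt_or_eq_of_le hv.2 with h | h
    · refine (left_nhdsWithin_Ioc_neBot h).mono (nhdsWithin_mono v ?_)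
      intro x hx
      exact ⟨⟨le_trans hv.1 hx.1.le, hx.2⟩, ne_of_gt hx.1⟩
    · subst h
      refine (right_nhdsWithin_Ico_neBot (lt_of_lt_of_le hab hv.2)).mono
        (nhdsWithin_mono v ?_)
      intro x hx
      exact ⟨⟨hx.1, hx.2.le⟩, ne_of_lt hx.2⟩
  refine ge_of_tendsto hs ?_
  filter_upwards [self_mem_nhdsWithin] with x hx
  rcases hx with ⟨hxI, hxv⟩
  rcases lt_or_gt_of_ne (Ne.symm hxv) with hlt | hgt
  · -- v < x
    rw [slope_def_field]
    apply div_nonneg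
    · exact sub_nonneg.2 (hm hv hxI hlt.le)
    · exact sub_nonneg.2 hlt.le
  · -- x < v
    rw [slope_def_field]
    rw [div_nonneg_iff]
    right
    constructor
    · exact sub_nonpos.2 (hm hxI hv hgt.le)
    · exact sub_nonpos.2 hgt.le

/-- estimate (8.5) of Lemma 8.2, borderline backward integration
in the outgoing null direction with only a 1/r weight; the positive radial
weight p > 0 of Δ saves the borderline term. -/
theorem stmt_8 (M P p : ℝ) (hM : 0 < M) (hP : 0 < P) (hp : 0 < p)
    (v₀ v₁ : ℝ) (hv : v₀ ≤ v₁)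
    (τ r Δ τ' r' : ℝ → ℝ)
    (hτd : ∀ v ∈ Set.Icc v₀ v₁, HasDerivAt τ (τ' v) v)
    (hrd : ∀ v ∈ Set.Icc v₀ v₁, HasDerivAt r (r' v) v)
    (hτ'c : ContinuousOn τ' (Set.Icc v₀ v₁))
    (hr'c : ContinuousOn r' (Set.Icc v₀ v₁))
    (hτmono : MonotoneOn τ (Set.Icc v₀ v₁))
    (hrmono : MonotoneOn r (Set.Icc v₀ v₁))
    (hr2M : ∀ v ∈ Set.Icc v₀ v₁, 2 * M ≤ r v)
    (hr' : ∀ v ∈ Set.Icc v₀ v₁, 8 * M ≤ r v → 1 / 2 ≤ r' v)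
    (hτ' : ∀ v ∈ Set.Icc v₀ v₁, r v ≤ 8 * M → 1 / 2 ≤ τ' v)
    (hΔc : ContinuousOn Δ (Set.Icc v₀ v₁))
    (hΔ : ∀ v ∈ Set.Icc v₀ v₁,
      |Δ v| ≤ Real.exp (-(P * τ v) / (2 * M)) * (2 * M / r v) ^ p) :
    ∫ v in v₀..v₁, (1 / r v) * |Δ v| ≤
      (2 / p + 4 / P) * (2 * M / r v₀) ^ p * Real.exp (-(P * τ v₀) / (2 * M)) := by
  have hv₀mem : v₀ ∈ Set.Icc v₀ v₁ := ⟨le_refl _, hv⟩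
  have hr₀ : 0 < r v₀ := lt_of_lt_of_le (by positivity) (hr2M v₀ hv₀mem)
  have hX₀0 : 0 ≤ (2 * M / r v₀) ^ p := Real.rpow_nonneg (by positivity) p
  rcases eq_or_lt_of_le hv with heq | hlt
  · subst heq
    rw [intervalIntegral.integral_same]
    have : 0 ≤ 2 / p + 4 / P := by positivity
    have := Real.exp_pos (-(P * τ v₀) / (2 * M))
    nlinarith [mul_nonneg (mul_nonneg ‹0 ≤ 2 / p + 4 / P› hX₀0)
      (Real.exp_pos (-(P * τ v₀) / (2 * M))).le]
  -- main case v₀ < v₁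
  have hrpos : ∀ v ∈ Set.Icc v₀ v₁, 0 < r v := fun v hvs =>
    lt_of_lt_of_le (by positivity) (hr2M v hvs)
  have hr'0 : ∀ v ∈ Set.Icc v₀ v₁, 0 ≤ r' v := fun v hvs =>
    aux_deriv_nonneg hlt hvs hrmono (hrd v hvs)
  have hτ'0 : ∀ v ∈ Set.Icc v₀ v₁, 0 ≤ τ' v := fun v hvs =>
    aux_deriv_nonneg hlt hvs hτmono (hτd v hvs)
  set c : ℝ := Real.exp (-(P * τ v₀) / (2 * M)) with hc
  set X₀ : ℝ := (2 * M / r v₀) ^ p with hX₀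
  set G : ℝ → ℝ := fun v =>
    (2 / p) * c * (2 * M / r v) ^ p + (4 / P) * X₀ * Real.exp (-(P * τ v) / (2 * M))
    with hGdef
  set g : ℝ → ℝ := fun v =>
    (2 / p) * c * ((p * (2 * M / r v) ^ (p - 1)) * (2 * M * (-(r' v) / (r v) ^ 2))) +
      (4 / P) * X₀ * (Real.exp (-(P * τ v) / (2 * M)) * (-(P * τ' v) / (2 * M)))
    with hgdef
  have hrc : ContinuousOn r (Set.Icc v₀ v₁) := fun v hvs =>
    (hrd v hvs).continuousAt.continuousWithinAt
  have hτc : ContinuousOn τ (Set.Icc v₀ v₁) := fun v hvs =>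
    (hτd v hvs).continuousAt.continuousWithinAt
  have hrne : ∀ v ∈ Set.Icc v₀ v₁, r v ≠ 0 := fun v hvs => (hrpos v hvs).ne'
  -- derivative of G
  have hG : ∀ v ∈ Set.Icc v₀ v₁, HasDerivAt G (g v) v := by
    intro v hvs
    have hinner : HasDerivAt (fun w => 2 * M / r w) (2 * M * (-(r' v) / (r v) ^ 2)) v := by
      have h1 := ((hrd v hvs).inv (hrne v hvs)).const_mul (2 * M)
      simpa [div_eq_mul_inv] using h1
    have hbase : (2 : ℝ) * M / r v ≠ 0 := by
      have := hrpos v hvs; positivity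
    have houter : HasDerivAt (fun w => (2 * M / r w) ^ p)
        ((p * (2 * M / r v) ^ (p - 1)) * (2 * M * (-(r' v) / (r v) ^ 2))) v :=
      by have h := (Real.hasDerivAt_rpow_const (p := p) (Or.inl hbase)).comp v hinner; exact h
    have hE : HasDerivAt (fun w => Real.exp (-(P * τ w) / (2 * M)))
        (Real.exp (-(P * τ v) / (2 * M)) * (-(P * τ' v) / (2 * M))) v := by
      have h2 : HasDerivAt (fun w => -(P * τ w) / (2 * M)) (-(P * τ' v) / (2 * M)) v :=
        (((hτd v hvs).const_mul P).neg).div_const (2 * M)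
      exact h2.exp
    exact (houter.const_mul ((2 / p) * c)).add (hE.const_mul ((4 / P) * X₀))
  -- pointwise bound
  have hfg : ∀ v ∈ Set.Icc v₀ v₁, (1 / r v) * |Δ v| ≤ -g v := by
    intro v hvs
    have hrv := hrpos v hvs
    have hq : (0 : ℝ) < 2 * M / r v := by positivity
    have hXX : (2 * M / r v) ^ (p - 1) * (2 * M / r v) = (2 * M / r v) ^ p := by
      rw [← Real.rpow_add_one hq.ne' (p - 1)]
      ring_nf
    set E : ℝ := Real.exp (-(P * τ v) / (2 * M)) with hE
    set X : ℝ := (2 * M / r v) ^ p with hXdef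
    have hX0 : 0 ≤ X := Real.rpow_nonneg (by positivity) p
    have hEc : E ≤ c := by
      apply Real.exp_le_exp.2
      have hττ : τ v₀ ≤ τ v := hτmono hv₀mem hvs hvs.1
      have : P * τ v₀ ≤ P * τ v := by nlinarith
      rw [div_le_div_iff₀ (by positivity) (by positivity)]
      nlinarith
    have hE0 : 0 < E := Real.exp_pos _
    have hc0 : 0 < c := Real.exp_pos _
    have hXX₀ : X ≤ X₀ := by
      apply Real.rpow_le_rpow (by positivity) _ hp.le
      apply div_le_div_of_nonneg_left (by positivity) hr₀
      exact hrmono hv₀mem hvs hvs.1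
    have hneg : -g v = 2 * c * X * (r' v) / r v +
        (2 / M) * X₀ * E * τ' v := by
      rw [hgdef]
      simp only
      rw [← hXX, hE]
      field_simp
      ring
    have hΔv : |Δ v| ≤ E * X := hΔ v hvs
    have hf1 : (1 / r v) * |Δ v| ≤ (1 / r v) * (E * X) := by
      apply mul_le_mul_of_nonneg_left hΔv (by positivity)
    rw [hneg]
    rcases le_total (r v) (8 * M) with hcase | hcase
    · -- near region: use τ' ≥ 1/2
      have hτ'h : 1 / 2 ≤ τ' v := hτ' v hvs hcase
      have hA0 : 0 ≤ 2 * c * X * (r' v) / r v := by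
        have := hr'0 v hvs; positivity
      have h2 : (1 / r v) * (E * X) ≤ (2 / M) * X₀ * E * τ' v := by
        have hstep1 : (1 / r v) * (E * X) ≤ (1 / (2 * M)) * (E * X₀) := by
          apply mul_le_mul
          · apply div_le_div_of_nonneg_left one_pos.le (by positivity) (hr2M v hvs)
          · exact mul_le_mul_of_nonneg_left hXX₀ hE0.le
          · positivity
          · positivity
        have hstep2 : (1 / (2 * M)) * (E * X₀) ≤ (2 / M) * X₀ * E * τ' v := by
          have h3 : (1 : ℝ) / (2 * M) * (E * X₀) = (2 / M) * X₀ * E * (1 / 4) := by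
            field_simp; ring
          rw [h3]
          apply mul_le_mul_of_nonneg_left (by linarith) (by positivity)
        linarith
      linarith
    · -- far region: use r' ≥ 1/2
      have hr'h : 1 / 2 ≤ r' v := hr' v hvs hcase
      have hB0 : 0 ≤ (2 / M) * X₀ * E * τ' v := by
        have := hτ'0 v hvs; positivity
      have h2 : (1 / r v) * (E * X) ≤ 2 * c * X * (r' v) / r v := by
        rw [div_eq_mul_one_div (2 * c * X * r' v) (r v), mul_comm (2 * c * X * r' v) _]
        apply mul_le_mul_of_nonneg_left _ (by positivity)
        nlinarith [mul_nonneg hc0.le hX0, mul_le_mul_of_nonneg_right hEc hX0]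
      linarith
  -- continuity of g
  have hgc : ContinuousOn g (Set.Icc v₀ v₁) := by
    rw [hgdef]
    apply ContinuousOn.add
    · apply ContinuousOn.mul continuousOn_const
      apply ContinuousOn.mul
      · apply ContinuousOn.mul continuousOn_const
        apply ContinuousOn.rpow_const
        · exact (continuousOn_const.div hrc hrne)
        · intro v hvs
          left
          have := hrpos v hvs; positivity
      · apply ContinuousOn.mul continuousOn_const
        apply ContinuousOn.div hr'c.neg (hrc.pow 2)
        intro v hvs
        exact pow_ne_zero 2 (hrne v hvs)
    · apply ContinuousOn.mul continuousOn_const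
      apply ContinuousOn.mul
      · exact Real.continuous_exp.comp_continuousOn
          (((hτc.const_smul P).neg).div_const (2 * M))
      · exact ((hτ'c.const_smul P).neg).div_const (2 * M)
  have huIcc : Set.uIcc v₀ v₁ = Set.Icc v₀ v₁ := Set.uIcc_of_le hv
  have hfc : ContinuousOn (fun v => (1 / r v) * |Δ v|) (Set.Icc v₀ v₁) :=
    (continuousOn_const.div hrc hrne).mul hΔc.abs
  have hfint : IntervalIntegrable (fun v => (1 / r v) * |Δ v|) MeasureTheory.volume v₀ v₁ :=
    (hfc.mono huIcc.le).intervalIntegrable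
  have hgint : IntervalIntegrable g MeasureTheory.volume v₀ v₁ :=
    (hgc.mono huIcc.le).intervalIntegrable
  have hFTC : ∫ v in v₀..v₁, g v = G v₁ - G v₀ := by
    apply intervalIntegral.integral_eq_sub_of_hasDerivAt
    · intro v hvmem
      exact hG v (by rwa [huIcc] at hvmem)
    · exact hgint
  have hmono : ∫ v in v₀..v₁, (1 / r v) * |Δ v| ≤ ∫ v in v₀..v₁, -g v := by
    apply intervalIntegral.integral_mono_on hv hfint hgint.neg
    exact hfg
  have hnegint : ∫ v in v₀..v₁, -g v = G v₀ - G v₁ := by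
    rw [intervalIntegral.integral_neg, hFTC]
    ring
  have hG₁0 : 0 ≤ G v₁ := by
    rw [hGdef]
    simp only
    have h1 : 0 ≤ (2 * M / r v₁) ^ p :=
      Real.rpow_nonneg (by have := hrpos v₁ ⟨hv, le_refl _⟩; positivity) p
    have h2 := (Real.exp_pos (-(P * τ v₁) / (2 * M))).le
    have hc0 := (Real.exp_pos (-(P * τ v₀) / (2 * M))).le
    positivity
  have hG₀ : G v₀ = (2 / p + 4 / P) * (2 * M / r v₀) ^ p *
      Real.exp (-(P * τ v₀) / (2 * M)) := by
    rw [hGdef]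
    simp only [hX₀, hc]
    ring
  calc ∫ v in v₀..v₁, (1 / r v) * |Δ v| ≤ ∫ v in v₀..v₁, -g v := hmono
    _ = G v₀ - G v₁ := hnegint
    _ ≤ G v₀ := by linarith
    _ = _ := hG₀
end

section
/- Let κ ≥ 0, α > 0 and Q ≥ 0 be real numbers and let v₀ ≤ v₁. Let q : [v₀,v₁] → ℝ be continuous with 0 ≤ q(v) ≤ Q·e^{−αv} for all v, and let Φ : [v₀,v₁] → ℝ be twice continuously differentiable satisfying Φ″(v) − κ·Φ′(v) + q(v)·Φ(v) = 0 on [v₀,v₁], with terminal conditions Φ(v₁) = Φ₁ > 0 and Φ′(v₁) = 0. If (Q/(α(α+κ)))·e^{−αv₀} ≤ 1/2, then for all v ∈ [v₀,v₁]: Φ′(v) ≥ 0, Φ₁/2 ≤ Φ(v) ≤ Φ₁, and 0 ≤ Φ₁ − Φ(v) ≤ (Q·Φ₁/(α(α+κ)))·e^{−αv}. -/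
private lemma mono_aux {a b : ℝ} {f f' : ℝ → ℝ}
    (hd : ∀ x ∈ Set.Icc a b, HasDerivAt f (f' x) x)
    (h0 : ∀ x ∈ Set.Ioo a b, 0 ≤ f' x) : MonotoneOn f (Set.Icc a b) := by
  apply monotoneOn_of_deriv_nonneg (convex_Icc a b)
  · exact fun x hx => (hd x hx).continuousAt.continuousWithinAt
  · rw [interior_Icc]
    exact fun x hx =>
      ((hd x (Set.Ioo_subset_Icc_self hx)).differentiableAt).differentiableWithinAt
  · rw [interior_Icc]
    intro x hx
    rw [(hd x (Set.Ioo_subset_Icc_self hx)).deriv]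
    exact h0 x hx

private lemma anti_aux {a b : ℝ} {f f' : ℝ → ℝ}
    (hd : ∀ x ∈ Set.Icc a b, HasDerivAt f (f' x) x)
    (h0 : ∀ x ∈ Set.Ioo a b, f' x ≤ 0) : AntitoneOn f (Set.Icc a b) := by
  apply antitoneOn_of_deriv_nonpos (convex_Icc a b)
  · exact fun x hx => (hd x hx).continuousAt.continuousWithinAt
  · rw [interior_Icc]
    exact fun x hx =>
      ((hd x (Set.Ioo_subset_Icc_self hx)).differentiableAt).differentiableWithinAt
  · rw [interior_Icc]
    intro x hx
    rw [(hd x (Set.Ioo_subset_Icc_self hx)).deriv]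
    exact h0 x hx

/-- Quantitative lemma assuming nonnegativity of Φ on `[a, v₁]`. -/
private lemma key_lemma (κ α Q Φ₁ : ℝ) (hκ : 0 ≤ κ) (hα : 0 < α) (hQ : 0 ≤ Q) (hΦ₁ : 0 < Φ₁)
    (v₀ v₁ : ℝ)
    (q Φ Φ' Φ'' : ℝ → ℝ)
    (hq : ∀ v ∈ Set.Icc v₀ v₁, 0 ≤ q v ∧ q v ≤ Q * Real.exp (-α * v))
    (hΦ'd : ∀ v ∈ Set.Icc v₀ v₁, HasDerivAt Φ' (Φ'' v) v)
    (hODE : ∀ v ∈ Set.Icc v₀ v₁, Φ'' v - κ * Φ' v + q v * Φ v = 0)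
    (hend' : Φ' v₁ = 0)
    (a : ℝ) (ha : a ∈ Set.Icc v₀ v₁)
    (hΦd : ∀ v ∈ Set.Icc v₀ v₁, HasDerivAt Φ (Φ' v) v)
    (hend : Φ v₁ = Φ₁)
    (hpos : ∀ s ∈ Set.Icc a v₁, 0 ≤ Φ s) :
    ∀ v ∈ Set.Icc a v₁, 0 ≤ Φ' v ∧ Φ v ≤ Φ₁ ∧
      Φ₁ - (Q * Φ₁ / (α * (α + κ))) * Real.exp (-α * v) ≤ Φ v := by
  have hsub : Set.Icc a v₁ ⊆ Set.Icc v₀ v₁ := Set.Icc_subset_Icc ha.1 le_rfl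
  have hav : a ≤ v₁ := ha.2
  have hv₁ : v₁ ∈ Set.Icc a v₁ := Set.right_mem_Icc.mpr hav
  have hακ : 0 < α + κ := by linarith
  -- derivative of exp(c*v)
  have hexp : ∀ (c x : ℝ), HasDerivAt (fun v => Real.exp (c * v)) (c * Real.exp (c * x)) x := by
    intro c x
    have h := ((hasDerivAt_id x).const_mul c).exp
    simpa [mul_comm] using h
  -- Step 1 : P = exp(-κ v) Φ' v is antitone on [a, v₁]
  have hPd : ∀ x ∈ Set.Icc a v₁,
      HasDerivAt (fun v => Real.exp (-κ * v) * Φ' v)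
        (Real.exp (-κ * x) * (Φ'' x - κ * Φ' x)) x := by
    intro x hx
    have h := (hexp (-κ) x).mul (hΦ'd x (hsub hx))
    refine h.congr_deriv ?_
    ring
  have hP : AntitoneOn (fun v => Real.exp (-κ * v) * Φ' v) (Set.Icc a v₁) := by
    apply anti_aux hPd
    intro x hx
    have hx' : x ∈ Set.Icc a v₁ := Set.Ioo_subset_Icc_self hx
    have hode := hODE x (hsub hx')
    have hqx := (hq x (hsub hx')).1
    have hΦx := hpos x hx'
    have : Φ'' x - κ * Φ' x = -(q x * Φ x) := by linarith
    rw [this]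
    have : 0 ≤ q x * Φ x := mul_nonneg hqx hΦx
    have he := Real.exp_pos (-κ * x)
    nlinarith
  have hΦ'nonneg : ∀ v ∈ Set.Icc a v₁, 0 ≤ Φ' v := by
    intro v hv
    have h := hP hv hv₁ hv.2
    simp only [hend', mul_zero] at h
    exact nonneg_of_mul_nonneg_right (by linarith [h]) (Real.exp_pos (-κ * v))
  -- Step 2 : Φ monotone, hence Φ ≤ Φ₁
  have hΦmono : MonotoneOn Φ (Set.Icc a v₁) :=
    mono_aux (fun x hx => hΦd x (hsub hx))
      (fun x hx => hΦ'nonneg x (Set.Ioo_subset_Icc_self hx))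
  have hΦle : ∀ v ∈ Set.Icc a v₁, Φ v ≤ Φ₁ := by
    intro v hv
    have := hΦmono hv hv₁ hv.2
    rwa [hend] at this
  -- Step 3 : Φ' v ≤ (QΦ₁/(α+κ)) exp(-α v)
  set B : ℝ := Q * Φ₁ / (α + κ) with hB
  have hBnn : 0 ≤ B := div_nonneg (mul_nonneg hQ hΦ₁.le) hακ.le
  have hXd : ∀ x ∈ Set.Icc a v₁,
      HasDerivAt (fun v => Real.exp (-κ * v) * Φ' v - B * Real.exp (-(α + κ) * v))
        (Real.exp (-κ * x) * (Φ'' x - κ * Φ' x) + Q * Φ₁ * Real.exp (-(α + κ) * x)) x := by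
    intro x hx
    have h := (hPd x hx).sub ((hexp (-(α + κ)) x).const_mul B)
    refine h.congr_deriv ?_
    have : B * (-(α + κ) * Real.exp (-(α + κ) * x))
        = -(Q * Φ₁ * Real.exp (-(α + κ) * x)) := by
      rw [hB]; field_simp
    rw [this]; ring
  have hX : MonotoneOn (fun v => Real.exp (-κ * v) * Φ' v - B * Real.exp (-(α + κ) * v))
      (Set.Icc a v₁) := by
    apply mono_aux hXd
    intro x hx
    have hx' : x ∈ Set.Icc a v₁ := Set.Ioo_subset_Icc_self hx
    have hode := hODE x (hsub hx')
    have hqx := hq x (hsub hx')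
    have hΦx := hpos x hx'
    have hΦx' := hΦle x hx'
    have h1 : Φ'' x - κ * Φ' x = -(q x * Φ x) := by linarith
    rw [h1]
    have h2 : q x * Φ x ≤ (Q * Real.exp (-α * x)) * Φ₁ :=
      mul_le_mul hqx.2 hΦx' hΦx (mul_nonneg hQ (Real.exp_pos _).le)
    have h3 : Real.exp (-(α + κ) * x) = Real.exp (-α * x) * Real.exp (-κ * x) := by
      rw [← Real.exp_add]; ring_nf
    rw [h3]
    have he := (Real.exp_pos (-κ * x)).le
    nlinarith [mul_le_mul_of_nonneg_left h2 he]
  have hΦ'le : ∀ v ∈ Set.Icc a v₁, Φ' v ≤ B * Real.exp (-α * v) := by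
    intro v hv
    have h := hX hv hv₁ hv.2
    simp only [hend', mul_zero, zero_sub] at h
    have h3 : Real.exp (-(α + κ) * v) = Real.exp (-α * v) * Real.exp (-κ * v) := by
      rw [← Real.exp_add]; ring_nf
    have he := Real.exp_pos (-κ * v)
    have hB1 : 0 ≤ B * Real.exp (-(α + κ) * v₁) := by positivity
    have h4 : Real.exp (-κ * v) * Φ' v ≤ B * Real.exp (-(α + κ) * v) := by linarith
    rw [h3] at h4
    have := (mul_le_mul_iff_left₀ he).mp (by linarith [h4] : Φ' v * Real.exp (-κ * v)
      ≤ (B * Real.exp (-α * v)) * Real.exp (-κ * v))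
    exact this
  -- Step 4 : Y = Φ + C exp(-α v) antitone, C = QΦ₁/(α(α+κ))
  set C : ℝ := Q * Φ₁ / (α * (α + κ)) with hC
  have hCα : C * α = B := by
    rw [hC, hB]; field_simp
  have hYd : ∀ x ∈ Set.Icc a v₁,
      HasDerivAt (fun v => Φ v + C * Real.exp (-α * v))
        (Φ' x - B * Real.exp (-α * x)) x := by
    intro x hx
    have h := (hΦd x (hsub hx)).add ((hexp (-α) x).const_mul C)
    refine h.congr_deriv ?_
    have : C * (-α * Real.exp (-α * x)) = -(B * Real.exp (-α * x)) := by
      rw [← hCα]; ring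
    rw [this]; ring
  have hY : AntitoneOn (fun v => Φ v + C * Real.exp (-α * v)) (Set.Icc a v₁) := by
    apply anti_aux hYd
    intro x hx
    have hx' : x ∈ Set.Icc a v₁ := Set.Ioo_subset_Icc_self hx
    linarith [hΦ'le x hx']
  have hΦge : ∀ v ∈ Set.Icc a v₁, Φ₁ - C * Real.exp (-α * v) ≤ Φ v := by
    intro v hv
    have h := hY hv hv₁ hv.2
    simp only [hend] at h
    have hCnn : 0 ≤ C := div_nonneg (mul_nonneg hQ hΦ₁.le) (by positivity)
    have : 0 ≤ C * Real.exp (-α * v₁) := by positivity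
    linarith
  exact fun v hv => ⟨hΦ'nonneg v hv, hΦle v hv, hΦge v hv⟩

/-- analytic core of Proposition 5.1: backward integration of
the Raychaudhuri-type ODE Φ″ − κΦ′ + qΦ = 0 on the horizon. -/
theorem stmt_10 (κ α Q Φ₁ : ℝ) (hκ : 0 ≤ κ) (hα : 0 < α) (hQ : 0 ≤ Q) (hΦ₁ : 0 < Φ₁)
    (v₀ v₁ : ℝ) (hv : v₀ ≤ v₁)
    (q Φ Φ' Φ'' : ℝ → ℝ)
    (hqc : ContinuousOn q (Set.Icc v₀ v₁))
    (hq : ∀ v ∈ Set.Icc v₀ v₁, 0 ≤ q v ∧ q v ≤ Q * Real.exp (-α * v))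
    (hΦd : ∀ v ∈ Set.Icc v₀ v₁, HasDerivAt Φ (Φ' v) v)
    (hΦ'd : ∀ v ∈ Set.Icc v₀ v₁, HasDerivAt Φ' (Φ'' v) v)
    (hΦ''c : ContinuousOn Φ'' (Set.Icc v₀ v₁))
    (hODE : ∀ v ∈ Set.Icc v₀ v₁, Φ'' v - κ * Φ' v + q v * Φ v = 0)
    (hend : Φ v₁ = Φ₁) (hend' : Φ' v₁ = 0)
    (hsmall : (Q / (α * (α + κ))) * Real.exp (-α * v₀) ≤ 1 / 2) :
    ∀ v ∈ Set.Icc v₀ v₁,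
      0 ≤ Φ' v ∧ Φ₁ / 2 ≤ Φ v ∧ Φ v ≤ Φ₁ ∧
      0 ≤ Φ₁ - Φ v ∧ Φ₁ - Φ v ≤ (Q * Φ₁ / (α * (α + κ))) * Real.exp (-α * v) := by
  have hακ : 0 < α + κ := by linarith
  set C : ℝ := Q * Φ₁ / (α * (α + κ)) with hC
  have hCnn : 0 ≤ C := by positivity
  have hCsmall : C * Real.exp (-α * v₀) ≤ Φ₁ / 2 := by
    have h : C * Real.exp (-α * v₀) = Φ₁ * ((Q / (α * (α + κ))) * Real.exp (-α * v₀)) := by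
      rw [hC]; ring
    rw [h]
    calc Φ₁ * ((Q / (α * (α + κ))) * Real.exp (-α * v₀)) ≤ Φ₁ * (1 / 2) :=
          mul_le_mul_of_nonneg_left hsmall hΦ₁.le
      _ = Φ₁ / 2 := by ring
  set A : Set ℝ := {a | a ∈ Set.Icc v₀ v₁ ∧ ∀ s ∈ Set.Icc a v₁, Φ₁ / 2 ≤ Φ s} with hA
  have hv₁A : v₁ ∈ A := by
    refine ⟨Set.right_mem_Icc.mpr hv, fun s hs => ?_⟩
    have : s = v₁ := le_antisymm hs.2 hs.1
    rw [this, hend]; linarith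
  have hAne : A.Nonempty := ⟨v₁, hv₁A⟩
  have hAlb : ∀ a ∈ A, v₀ ≤ a := fun a ha => ha.1.1
  have hAbdd : BddBelow A := ⟨v₀, hAlb⟩
  set m := sInf A with hm
  have hm_lb : v₀ ≤ m := le_csInf hAne hAlb
  have hm_ub : m ≤ v₁ := csInf_le hAbdd hv₁A
  have hmI : m ∈ Set.Icc v₀ v₁ := ⟨hm_lb, hm_ub⟩
  -- Φ ≥ Φ₁/2 on [m, v₁]
  have hgt : ∀ s, m < s → s ≤ v₁ → Φ₁ / 2 ≤ Φ s := by
    intro s hms hs1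
    obtain ⟨a, haA, halt⟩ := exists_lt_of_csInf_lt hAne hms
    exact haA.2 s ⟨halt.le, hs1⟩
  have hmA : ∀ s ∈ Set.Icc m v₁, Φ₁ / 2 ≤ Φ s := by
    intro s hs
    rcases eq_or_lt_of_le hs.1 with heq | hlt
    · rcases eq_or_lt_of_le hs.2 with heq1 | hlt1
      · rw [heq1, hend]; linarith
      · -- s = m < v₁ : continuity from the right
        have hcont : Filter.Tendsto Φ (nhdsWithin s (Set.Ioi s)) (nhds (Φ s)) :=
          ((hΦd s (heq ▸ hmI)).continuousAt).continuousWithinAt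
        refine ge_of_tendsto hcont ?_
        filter_upwards [Ioc_mem_nhdsGT_of_mem ⟨le_refl s, hlt1⟩] with t ht
        exact hgt t (heq ▸ ht.1) ht.2
    · exact hgt s hlt hs.2
  have hposm : ∀ s ∈ Set.Icc m v₁, 0 ≤ Φ s := fun s hs => le_trans (by linarith) (hmA s hs)
  have hkeym := key_lemma κ α Q Φ₁ hκ hα hQ hΦ₁ v₀ v₁ q Φ Φ' Φ'' hq hΦ'd hODE hend'
      m hmI hΦd hend hposm
  rw [← hC] at hkeym
  -- m = v₀
  have hm0 : m = v₀ := by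
    by_contra h
    have hv₀m : v₀ < m := lt_of_le_of_ne hm_lb (Ne.symm h)
    have hstrict : ∀ s ∈ Set.Icc m v₁, Φ₁ / 2 < Φ s := by
      intro s hs
      have h1 := (hkeym s hs).2.2
      have hsv₀ : v₀ < s := lt_of_lt_of_le hv₀m hs.1
      have h2 : Real.exp (-α * s) < Real.exp (-α * v₀) := by
        apply Real.exp_lt_exp.mpr; nlinarith
      rcases hCnn.eq_or_lt with hC0 | hC0
      · rw [← hC0] at h1; simp at h1; linarith
      · have : C * Real.exp (-α * s) < C * Real.exp (-α * v₀) :=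
          mul_lt_mul_of_pos_left h2 hC0
        linarith
    have hcont : ContinuousAt Φ m := (hΦd m hmI).continuousAt
    have hΦm : Φ₁ / 2 < Φ m := hstrict m ⟨le_refl m, hm_ub⟩
    have hev : ∀ᶠ s in nhds m, Φ₁ / 2 < Φ s := hcont.eventually (eventually_gt_nhds hΦm)
    obtain ⟨ε, hε, hball⟩ := Metric.eventually_nhds_iff.mp hev
    set m' := max v₀ (m - ε / 2) with hm'
    have hm'm : m' < m := max_lt hv₀m (by linarith)
    have hm'I : m' ∈ Set.Icc v₀ v₁ := ⟨le_max_left _ _, le_trans hm'm.le hm_ub⟩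
    have hm'A : m' ∈ A := by
      refine ⟨hm'I, fun s hs => ?_⟩
      rcases le_or_gt m s with hms | hms
      · exact hmA s ⟨hms, hs.2⟩
      · have h1 : m - ε / 2 ≤ s := le_trans (le_max_right _ _) hs.1
        have hd : dist s m < ε := by
          rw [Real.dist_eq, abs_lt]; constructor <;> linarith
        exact (hball hd).le
    exact absurd (csInf_le hAbdd hm'A) (not_le.mpr hm'm)
  rw [hm0] at hmA hposm hkeym
  intro v hvI
  obtain ⟨h1, h2, h3⟩ := hkeym v hvI
  exact ⟨h1, hmA v hvI, h2, by linarith, by linarith⟩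
end

section
/- Let M > 0 and 1 < h ≤ 2. For x ∈ ℝ let r̃(x) denote the unique real number r > 2M with e^{x/(2M)} = (1 − 2M/r)/((2M/r)·e^{−r/(2M)}), and define f(x) = ∫₀ˣ √(1 − (2M/r̃(t))^h·(1 − 2M/r̃(t))) dt. Then the limit of f(x) − x as x → −∞ exists and is a finite real number. -/
open MeasureTheory Filter Set


/-- With r̃(x) the Schwarzschild radius as a function of the
tortoise coordinate x = r⋆ and f(x) = ∫₀ˣ √(1 − (2M/r̃(t))^h·(1 − 2M/r̃(t))) dt
(for 1 < h ≤ 2), the limit of f(x) − x as x → −∞ exists and is finite. -/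
theorem stmt_18 (M h : ℝ) (hM : 0 < M) (hh1 : 1 < h) (hh2 : h ≤ 2)
    (rt : ℝ → ℝ)
    (hrt : ∀ x : ℝ, 2 * M < rt x ∧
      Real.exp (x / (2 * M)) =
        (1 - 2 * M / rt x) / ((2 * M / rt x) * Real.exp (-rt x / (2 * M)))) :
    ∃ L : ℝ, Filter.Tendsto
      (fun x : ℝ =>
        (∫ t in (0 : ℝ)..x,
          Real.sqrt (1 - (2 * M / rt t) ^ h * (1 - 2 * M / rt t))) - x)
      Filter.atBot (nhds L) := by
  set c := 2 * M with hc
  have hc0 : 0 < c := by positivity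
  set g : ℝ → ℝ := fun t => Real.sqrt (1 - (c / rt t) ^ h * (1 - c / rt t)) with hg
  -- basic facts about rt
  have hrtpos : ∀ x, 0 < rt x := fun x => lt_trans hc0 (hrt x).1
  -- the defining equation rewritten
  have heq : ∀ x, 1 - c / rt x = Real.exp (x / c) * ((c / rt x) * Real.exp (-rt x / c)) := by
    intro x
    have h1 := (hrt x).2
    have hne : (c / rt x) * Real.exp (-rt x / c) ≠ 0 := by
      have := (hrtpos x)
      positivity
    rw [eq_div_iff hne] at h1
    linarith [h1]
  -- rt is monotone
  have hmono : Monotone rt := by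
    have hψ : StrictMonoOn (fun r => (r / c - 1) * Real.exp (r / c)) (Ici c) := by
      intro a ha b hb hab
      have h1 : a / c - 1 < b / c - 1 := by
        have := (div_lt_div_iff_of_pos_right hc0).2 hab
        linarith
      have h2 : Real.exp (a / c) < Real.exp (b / c) := by
        exact Real.exp_lt_exp.2 ((div_lt_div_iff_of_pos_right hc0).2 hab)
      have h0 : 0 ≤ a / c - 1 := by
        have : 1 ≤ a / c := (one_le_div hc0).2 ha
        linarith
      calc (a / c - 1) * Real.exp (a / c) ≤ (a / c - 1) * Real.exp (b / c) :=
            mul_le_mul_of_nonneg_left h2.le h0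
        _ < (b / c - 1) * Real.exp (b / c) :=
            mul_lt_mul_of_pos_right h1 (Real.exp_pos _)
    have hψrt : ∀ x, (rt x / c - 1) * Real.exp (rt x / c) = Real.exp (x / c) := by
      intro x
      have h1 := heq x
      have hrx := hrtpos x
      have hex : Real.exp (-rt x / c) = (Real.exp (rt x / c))⁻¹ := by
        rw [← Real.exp_neg]; ring_nf
      rw [hex] at h1
      have hne : Real.exp (rt x / c) ≠ 0 := (Real.exp_pos _).ne'
      field_simp at h1 ⊢
      exact mul_right_cancel₀ hrx.ne' (by linear_combination rt x * h1)
    intro x y hxy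
    have : (rt x / c - 1) * Real.exp (rt x / c) ≤ (rt y / c - 1) * Real.exp (rt y / c) := by
      rw [hψrt, hψrt]; exact Real.exp_le_exp.2 (by gcongr)
    exact (hψ.le_iff_le (le_of_lt (hrt x).1) (le_of_lt (hrt y).1)).1 this
  -- g is measurable
  have hrtm : Measurable rt := hmono.measurable
  have hgm : Measurable g := by
    have hrp : Measurable (fun t => (c / rt t) ^ h) :=
      (Real.continuous_rpow_const (by linarith : (0:ℝ) ≤ h)).measurable.comp
        (measurable_const.div hrtm)
    exact (measurable_const.sub (hrp.mul
      (measurable_const.sub (measurable_const.div hrtm)))).sqrt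
  -- pointwise bounds
  have hratio : ∀ t, 0 < c / rt t ∧ c / rt t < 1 := by
    intro t
    exact ⟨div_pos hc0 (hrtpos t), (div_lt_one (hrtpos t)).2 (hrt t).1⟩
  have hA : ∀ t, 0 ≤ (c / rt t) ^ h * (1 - c / rt t) ∧
      (c / rt t) ^ h * (1 - c / rt t) ≤ Real.exp (t / c) := by
    intro t
    obtain ⟨hp, hl⟩ := hratio t
    constructor
    · apply mul_nonneg (Real.rpow_nonneg hp.le h); linarith
    · have h1 : (c / rt t) ^ h ≤ 1 := Real.rpow_le_one hp.le hl.le (by linarith)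
      have h2 : (c / rt t) ^ h * (1 - c / rt t) ≤ 1 - c / rt t := by
        nlinarith
      have h3 : 1 - c / rt t ≤ Real.exp (t / c) := by
        rw [heq t]
        have he : Real.exp (-rt t / c) ≤ 1 := by
          apply Real.exp_le_one_iff.2
          have := (hrtpos t)
          have : 0 < rt t / c := div_pos this hc0
          linarith [neg_div (c) (rt t)]
        have hb : c / rt t * Real.exp (-rt t / c) ≤ 1 := by
          nlinarith [Real.exp_pos (-rt t / c)]
        nlinarith [Real.exp_pos (t / c), Real.exp_pos (-rt t / c),
          mul_nonneg hp.le (Real.exp_pos (-rt t / c)).le]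
      linarith
  have hg01 : ∀ t, 0 ≤ g t ∧ g t ≤ 1 := by
    intro t
    refine ⟨Real.sqrt_nonneg _, ?_⟩
    rw [show (1:ℝ) = Real.sqrt 1 from (Real.sqrt_one).symm]
    apply Real.sqrt_le_sqrt
    linarith [(hA t).1]
  -- key bound : 1 - g t ≤ exp (t/c)
  have hkey : ∀ t, 1 - g t ≤ Real.exp (t / c) := by
    intro t
    obtain ⟨hA0, hAe⟩ := hA t
    set A := (c / rt t) ^ h * (1 - c / rt t) with hAdef
    have hA1 : A ≤ 1 := le_trans (by nlinarith [hratio t, Real.rpow_le_one (hratio t).1.le (hratio t).2.le (by linarith : (0:ℝ) ≤ h)]) (le_refl (1:ℝ))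
    have hs : 1 - A ≤ g t := by
      have : (1 - A) = Real.sqrt ((1 - A) ^ 2) := (Real.sqrt_sq (by linarith)).symm
      rw [hg]
      calc 1 - A = Real.sqrt ((1 - A) ^ 2) := this
        _ ≤ Real.sqrt (1 - A) := Real.sqrt_le_sqrt (by nlinarith)
    linarith
  -- integrability
  have hgi : ∀ a b : ℝ, IntervalIntegrable g volume a b := by
    intro a b
    apply (intervalIntegrable_const (c := (1:ℝ))).mono_fun
      (hgm.aestronglyMeasurable.restrict)
    filter_upwards with t
    simp only [Real.norm_eq_abs]
    rw [abs_of_nonneg (hg01 t).1, abs_one]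
    exact (hg01 t).2
  -- F is antitone
  set F : ℝ → ℝ := fun x => (∫ t in (0:ℝ)..x, g t) - x with hF
  have hFeq : ∀ x, F x = ∫ t in (0:ℝ)..x, (g t - 1) := by
    intro x
    rw [intervalIntegral.integral_sub (hgi 0 x) intervalIntegrable_const,
      intervalIntegral.integral_const]
    simp [hF]
  have hanti : Antitone F := by
    intro x y hxy
    rw [hFeq, hFeq]
    have hsplit : ∫ t in (0:ℝ)..y, (g t - 1) =
        (∫ t in (0:ℝ)..x, (g t - 1)) + ∫ t in x..y, (g t - 1) := by
      rw [intervalIntegral.integral_add_adjacent_intervals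
        ((hgi 0 x).sub intervalIntegrable_const) ((hgi x y).sub intervalIntegrable_const)]
    rw [hsplit]
    have hnn : 0 ≤ ∫ t in x..y, (1 - g t) :=
      intervalIntegral.integral_nonneg hxy (fun t _ => by linarith [(hg01 t).2])
    have hneg : ∫ t in x..y, (g t - 1) = -∫ t in x..y, (1 - g t) := by
      rw [← intervalIntegral.integral_neg]
      congr 1; funext t; ring
    linarith
  -- F is bounded above by c
  have hbdd : ∀ x, F x ≤ c := by
    intro x
    rcases le_or_gt x 0 with hx | hx
    · rw [hFeq, intervalIntegral.integral_symm, ← intervalIntegral.integral_neg]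
      have hle : ∫ t in x..(0:ℝ), -(g t - 1) ≤ ∫ t in x..(0:ℝ), Real.exp (t / c) := by
        apply intervalIntegral.integral_mono_on hx
          (((hgi x 0).sub intervalIntegrable_const).neg)
          ((Real.continuous_exp.comp (continuous_id.div_const c)).intervalIntegrable x 0)
        intro t _
        show -(g t - 1) ≤ Real.exp (t / c)
        linarith [hkey t]
      have hcalc : ∫ t in x..(0:ℝ), Real.exp (t / c) ≤ c := by
        rw [intervalIntegral.integral_comp_div (f := Real.exp) hc0.ne']
        rw [integral_exp]
        have h1 : Real.exp (x / c) > 0 := Real.exp_pos _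
        simp only [zero_div, Real.exp_zero, smul_eq_mul]
        nlinarith
      linarith
    · have : F x ≤ F 0 := hanti hx.le
      have hF0 : F 0 = 0 := by simp [hF]
      linarith
  refine ⟨⨆ x, F x, tendsto_atBot_ciSup hanti ?_⟩
  rw [bddAbove_def]
  exact ⟨c, by rintro y ⟨x, rfl⟩; exact hbdd x⟩
end
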